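/- Welfare-constrained optimum solves the weighted objective: fix a finite game with utilities in [0,1] and ε > 0. Define for a joint strategy π its exploitability expl(π) = max_{i} max_{â_i∈𝒜_i} E_{a∼π}[𝒰_i(â_i, a_{−i}) − 𝒰_i(a)] and the grand-coalition average gain g(π) = max_{â∈𝒜} (1/N) Σ_{i=1}^N E_{a∼π}[𝒰_i(â) − 𝒰_i(a)] (note g(π) ≥ 0). Let π* maximize social welfare SW(π) = Σ_i E_π[𝒰_i] subject to expl(π) ≤ ε (such a maximizer exists), let g* = g(π*), and set w = g*/(ε + g*) ∈ [0,1). Then π* minimizes the weighted objective W(π) = max(w · expl(π), (1 − w) · g(π)) over all joint strategies π ∈ Δ(𝒜). -/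
import Mathlib


open Finset

/-- A probability distribution on a finite type. -/
def IsDist {X : Type*} [Fintype X] (p : X → ℝ) : Prop :=
  (∀ x, 0 ≤ p x) ∧ ∑ x, p x = 1

/-- The exploitability of a joint strategy:
`max_{i} max_{â_i ∈ 𝒜_i} E_{a∼π}[𝒰_i(â_i, a_{−i}) − 𝒰_i(a)]`. -/
noncomputable def expl {N : ℕ} {A : Fin N → Type} [∀ i, Fintype (A i)] [∀ i, DecidableEq (A i)]
    (U : Fin N → ((i : Fin N) → A i) → ℝ) (π : ((i : Fin N) → A i) → ℝ) : ℝ :=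
  sSup {x | ∃ (i : Fin N) (b : A i),
    x = ∑ a, π a * (U i (Function.update a i b) - U i a)}

/-- Social welfare: the sum of all players' expected utilities. -/
noncomputable def SW {N : ℕ} {A : Fin N → Type} [∀ i, Fintype (A i)]
    (U : Fin N → ((i : Fin N) → A i) → ℝ) (π : ((i : Fin N) → A i) → ℝ) : ℝ :=
  ∑ i, ∑ a, π a * U i a

/-- The exploitability welfare frontier: the maximum social welfare over all `ε`-CCEs. -/
noncomputable def EWF {N : ℕ} {A : Fin N → Type} [∀ i, Fintype (A i)] [∀ i, DecidableEq (A i)]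
    (U : Fin N → ((i : Fin N) → A i) → ℝ) (ε : ℝ) : ℝ :=
  sSup {x | ∃ π, IsDist π ∧ expl U π ≤ ε ∧ x = SW U π}

/-- The grand-coalition average deviation gain:
`g(π) = max_{â∈𝒜} (1/N) Σ_{i=1}^N E_{a∼π}[𝒰_i(â) − 𝒰_i(a)]`. -/
noncomputable def gGrand {N : ℕ} {A : Fin N → Type} [∀ i, Fintype (A i)]
    (U : Fin N → ((i : Fin N) → A i) → ℝ) (π : ((i : Fin N) → A i) → ℝ) : ℝ :=
  sSup {x | ∃ dev : (i : Fin N) → A i,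
    x = (N : ℝ)⁻¹ * ∑ i, ∑ a, π a * (U i dev - U i a)}

/-- Welfare-constrained optimum solves the weighted objective: if `π*` maximizes social
welfare subject to `expl(π) ≤ ε` and `w = g*/(ε + g*)` with `g* = g(π*)`, then `π*`
minimizes `W(π) = max(w·expl(π), (1−w)·g(π))` over all joint strategies. -/
theorem stmt10 {N : ℕ} {A : Fin N → Type} [∀ i, Fintype (A i)] [∀ i, DecidableEq (A i)]
    [∀ i, Nonempty (A i)] (hN : 0 < N)
    (U : Fin N → ((i : Fin N) → A i) → ℝ) (hU : ∀ i a, U i a ∈ Set.Icc (0 : ℝ) 1)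
    (ε : ℝ) (hε : 0 < ε)
    (πstar : ((i : Fin N) → A i) → ℝ) (hπstar : IsDist πstar)
    (hfeas : expl U πstar ≤ ε)
    (hmax : ∀ π, IsDist π → expl U π ≤ ε → SW U π ≤ SW U πstar) :
    ∀ π, IsDist π →
      max ((gGrand U πstar / (ε + gGrand U πstar)) * expl U πstar)
          ((1 - gGrand U πstar / (ε + gGrand U πstar)) * gGrand U πstar) ≤
        max ((gGrand U πstar / (ε + gGrand U πstar)) * expl U π)
          ((1 - gGrand U πstar / (ε + gGrand U πstar)) * gGrand U π) := by
  intro π hπ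
  -- pointwise formula for the grand-coalition gain
  have key : ∀ (ρ : ((i : Fin N) → A i) → ℝ), IsDist ρ → ∀ dev : (i : Fin N) → A i,
      (N : ℝ)⁻¹ * ∑ i, ∑ a, ρ a * (U i dev - U i a)
        = (N : ℝ)⁻¹ * ((∑ i, U i dev) - SW U ρ) := by
    intro ρ hρ dev
    congr 1
    rw [SW, ← Finset.sum_sub_distrib]
    refine Finset.sum_congr rfl fun i _ => ?_
    have h1 : ∑ a, ρ a * (U i dev - U i a)
        = (∑ a, ρ a) * U i dev - ∑ a, ρ a * U i a := by
      rw [Finset.sum_mul, ← Finset.sum_sub_distrib]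
      exact Finset.sum_congr rfl fun a _ => by ring
    rw [h1, hρ.2, one_mul]
  have hgG : ∀ (ρ : ((i : Fin N) → A i) → ℝ), IsDist ρ →
      gGrand U ρ = sSup (Set.range fun dev : (i : Fin N) → A i =>
        (N : ℝ)⁻¹ * ((∑ i, U i dev) - SW U ρ)) := by
    intro ρ hρ
    unfold gGrand
    congr 1
    ext x
    simp only [Set.mem_setOf_eq, Set.mem_range]
    constructor
    · rintro ⟨d, rfl⟩; exact ⟨d, (key ρ hρ d).symm⟩
    · rintro ⟨d, rfl⟩; exact ⟨d, (key ρ hρ d).symm⟩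
  have hAne : Nonempty ((i : Fin N) → A i) := inferInstance
  have hbdd : ∀ (ρ : ((i : Fin N) → A i) → ℝ),
      BddAbove (Set.range fun dev : (i : Fin N) → A i =>
        (N : ℝ)⁻¹ * ((∑ i, U i dev) - SW U ρ)) :=
    fun ρ => (Set.finite_range _).bddAbove
  set g := gGrand U πstar with hgdef
  set w := g / (ε + g) with hwdef
  -- g ≥ 0
  have hle : ∀ dev, (N : ℝ)⁻¹ * ((∑ i, U i dev) - SW U πstar) ≤ g := by
    intro dev
    rw [hgdef, hgG πstar hπstar]
    exact le_csSup (hbdd πstar) ⟨dev, rfl⟩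
  have hsum0 : ∑ dev : (i : Fin N) → A i,
      πstar dev * ((N : ℝ)⁻¹ * ((∑ i, U i dev) - SW U πstar)) = 0 := by
    have hswap : ∑ dev : (i : Fin N) → A i, πstar dev * (∑ i, U i dev) = SW U πstar := by
      rw [SW, Finset.sum_comm]
      exact Finset.sum_congr rfl fun dev _ => by rw [Finset.mul_sum]
    have : ∑ dev : (i : Fin N) → A i,
        πstar dev * ((N : ℝ)⁻¹ * ((∑ i, U i dev) - SW U πstar))
        = (N : ℝ)⁻¹ * ((∑ dev : (i : Fin N) → A i, πstar dev * (∑ i, U i dev))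
            - (∑ dev : (i : Fin N) → A i, πstar dev) * SW U πstar) := by
      rw [Finset.sum_mul, ← Finset.sum_sub_distrib, Finset.mul_sum]
      exact Finset.sum_congr rfl fun dev _ => by ring
    rw [this, hswap, hπstar.2, one_mul, sub_self, mul_zero]
  have hg0 : 0 ≤ g := by
    have h1 : ∑ dev : (i : Fin N) → A i,
        πstar dev * ((N : ℝ)⁻¹ * ((∑ i, U i dev) - SW U πstar))
        ≤ ∑ dev : (i : Fin N) → A i, πstar dev * g :=
      Finset.sum_le_sum fun dev _ =>
        mul_le_mul_of_nonneg_left (hle dev) (hπstar.1 dev)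
    rw [hsum0, ← Finset.sum_mul, hπstar.2, one_mul] at h1
    exact h1
  have hεg : 0 < ε + g := by linarith
  have hw0 : 0 ≤ w := div_nonneg hg0 hεg.le
  have h1w0 : 0 ≤ 1 - w := by
    rw [hwdef]
    have : g / (ε + g) ≤ 1 := (div_le_one hεg).2 (by linarith)
    linarith
  have hwε : w * ε = (1 - w) * g := by
    rw [hwdef]
    field_simp
    ring
  -- LHS ≤ (1-w) * g
  have hLHS : max (w * expl U πstar) ((1 - w) * g) ≤ (1 - w) * g :=
    max_le (by
      calc w * expl U πstar ≤ w * ε := mul_le_mul_of_nonneg_left hfeas hw0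
        _ = (1 - w) * g := hwε) le_rfl
  refine le_trans hLHS ?_
  by_cases hcase : expl U π ≤ ε
  · -- feasible: g(π) ≥ g
    have hSW : SW U π ≤ SW U πstar := hmax π hπ hcase
    have hgπ : g ≤ gGrand U π := by
      rw [hgdef, hgG πstar hπstar, hgG π hπ]
      refine csSup_le (Set.range_nonempty _) ?_
      rintro x ⟨dev, rfl⟩
      refine le_trans ?_ (le_csSup (hbdd π) ⟨dev, rfl⟩)
      have hNinv : (0 : ℝ) ≤ (N : ℝ)⁻¹ := by positivity
      exact mul_le_mul_of_nonneg_left (by linarith) hNinv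
    exact le_trans (mul_le_mul_of_nonneg_left hgπ h1w0) (le_max_right _ _)
  · push_neg at hcase
    refine le_trans ?_ (le_max_left _ _)
    calc (1 - w) * g = w * ε := hwε.symm
      _ ≤ w * expl U π := mul_le_mul_of_nonneg_left hcase.le hw0
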